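/- Theorem (SMB from the bias–variance trade-off). Assume (A4), (A5), and (A8): there exists s_j > 0 such that 𝚺_{k,j}⁻¹ ⪯ s_j 𝚺_{k,j,diag}⁻¹ for all k ≤ K, where 𝚺_{k,j,diag} is the diagonal matrix consisting of the diagonal entries of 𝚺_{k,j}. Assume moreover that the weights satisfy w_{l,i} w_{m,i} = w_{l,i} for all l ≤ m and all i (nested rectangular-type kernels). Fix j and θ, define b̄_k = max_{1 ≤ l ≤ k} |e_jᵀ(θ̄_l − θ)| and σ_k² = e_jᵀ B_k⁻¹ Ψ W_k Σ0 W_k Ψᵀ B_k⁻¹ e_j (the variance of e_jᵀ θ̃_k under Y ~ N(f, Σ0)), and let k⋆(j) = max{k ≤ K : b̄_k ≤ C_j σ_k} for a constant C_j > 0. Then the small modeling bias bound Δ_j(k⋆(j)) ≤ s_j C_j² (1+δ) (1 − u0⁻¹)⁻¹ holds. -/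

import Mathlib

open MeasureTheory ProbabilityTheory Matrix Real

noncomputable section

namespace SpatialAdapt

/-- The law `N(m, diag(s i ^ 2))` on `ℝ^n`: product of independent one-dimensional Gaussians. -/
def gaussianVec (n : ℕ) (m s : Fin n → ℝ) : Measure (Fin n → ℝ) :=
  Measure.pi fun i => gaussianReal (m i) (Real.toNNReal (s i ^ 2))

/-- Löwner partial order on symmetric matrices: `A ⪯ B` iff `B - A` is positive semidefinite. -/
def LoewnerLE {ι : Type*} [Fintype ι] (A B : Matrix ι ι ℝ) : Prop :=
  (B - A).PosSemidef

/-- Diagonal covariance matrix `diag(s i ^ 2)`. -/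
def covMat (n : ℕ) (s : Fin n → ℝ) : Matrix (Fin n) (Fin n) ℝ :=
  Matrix.diagonal fun i => s i ^ 2

/-- `W = Σ^{-1/2} 𝒲 Σ^{-1/2} = diag(w i / σ i ^ 2)`. -/
def Wmat (n : ℕ) (σv : Fin n → ℝ) (w : Fin n → ℝ) : Matrix (Fin n) (Fin n) ℝ :=
  Matrix.diagonal fun i => w i / σv i ^ 2

/-- `B = Ψ W Ψᵀ`. -/
def Bmat (n p : ℕ) (σv : Fin n → ℝ) (Ψ : Matrix (Fin p) (Fin n) ℝ) (w : Fin n → ℝ) :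
    Matrix (Fin p) (Fin p) ℝ :=
  Ψ * Wmat n σv w * Ψᵀ

/-- `D = B⁻¹ Ψ W`. -/
def Dmat (n p : ℕ) (σv : Fin n → ℝ) (Ψ : Matrix (Fin p) (Fin n) ℝ) (w : Fin n → ℝ) :
    Matrix (Fin p) (Fin n) ℝ :=
  (Bmat n p σv Ψ w)⁻¹ * Ψ * Wmat n σv w

/-- The quasi-MLE `θ̃ = B⁻¹ Ψ W y`. -/
def thetaTilde (n p : ℕ) (σv : Fin n → ℝ) (Ψ : Matrix (Fin p) (Fin n) ℝ) (w : Fin n → ℝ)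
    (y : Fin n → ℝ) : Fin p → ℝ :=
  (Dmat n p σv Ψ w).mulVec y

/-- Quadratic form `v ⬝ B v`. -/
def quadForm {p : ℕ} (B : Matrix (Fin p) (Fin p) ℝ) (v : Fin p → ℝ) : ℝ :=
  v ⬝ᵥ B.mulVec v

/-- The test statistic `T_{lm} = (θ̃_l - θ̃_m)ᵀ B_l (θ̃_l - θ̃_m)`. -/
def Tstat (n p : ℕ) (σv : Fin n → ℝ) (Ψ : Matrix (Fin p) (Fin n) ℝ) (w : ℕ → Fin n → ℝ)
    (l m : ℕ) (y : Fin n → ℝ) : ℝ :=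
  quadForm (Bmat n p σv Ψ (w l))
    (thetaTilde n p σv Ψ (w l) y - thetaTilde n p σv Ψ (w m) y)

/-- The adaptive index `k̂ = max {k ≤ K : T_{lm} ≤ z_l for all 1 ≤ l < m ≤ k}`. -/
def khat (n p K : ℕ) (σv : Fin n → ℝ) (Ψ : Matrix (Fin p) (Fin n) ℝ) (w : ℕ → Fin n → ℝ)
    (z : ℕ → ℝ) (y : Fin n → ℝ) : ℕ :=
  sSup {k | k ≤ K ∧ ∀ l m, 1 ≤ l → l < m → m ≤ k → Tstat n p σv Ψ w l m y ≤ z l}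

/-- The adaptive estimator `θ̂ = θ̃_{k̂}`. -/
def thetaHat (n p K : ℕ) (σv : Fin n → ℝ) (Ψ : Matrix (Fin p) (Fin n) ℝ) (w : ℕ → Fin n → ℝ)
    (z : ℕ → ℝ) (y : Fin n → ℝ) : Fin p → ℝ :=
  thetaTilde n p σv Ψ (w (khat n p K σv Ψ w z y)) y

/-- The last accepted estimator after `k` steps: `θ̂_k = θ̃_{min(k, k̂)}`. -/
def thetaHatStep (n p K : ℕ) (σv : Fin n → ℝ) (Ψ : Matrix (Fin p) (Fin n) ℝ)
    (w : ℕ → Fin n → ℝ) (z : ℕ → ℝ) (k : ℕ) (y : Fin n → ℝ) : Fin p → ℝ :=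
  thetaTilde n p σv Ψ (w (min k (khat n p K σv Ψ w z y))) y

/-- `C(p, r) = E|χ²_p|^r = 2^r Γ(r + p/2) / Γ(p/2)`. -/
def Cpr (p : ℕ) (r : ℝ) : ℝ :=
  2 ^ r * Real.Gamma (r + p / 2) / Real.Gamma (p / 2)

/-- `P(χ²_p ≥ t)`, the tail of the chi-squared distribution with `p` degrees of freedom. -/
def chiSqTail (p : ℕ) (t : ℝ) : ℝ :=
  ((Measure.pi fun _ : Fin p => gaussianReal 0 1) {x | t ≤ ∑ i, x i ^ 2}).toReal

/-- The `pk × pk` joint covariance `𝔻_k (J_k ⊗ Σm) 𝔻_kᵀ`, whose `(l, m)` block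
is `D_l Σm D_mᵀ` (blocks are indexed by `1, …, k`, i.e. by `Fin k` shifted by one). -/
def jointCov (n p : ℕ) (σv σm : Fin n → ℝ) (Ψ : Matrix (Fin p) (Fin n) ℝ)
    (w : ℕ → Fin n → ℝ) (k : ℕ) : Matrix (Fin k × Fin p) (Fin k × Fin p) ℝ :=
  Matrix.of fun a b =>
    (Dmat n p σv Ψ (w (a.1 + 1)) * covMat n σm * (Dmat n p σv Ψ (w (b.1 + 1)))ᵀ) a.2 b.2

/-- The stacked bias vector `b(k) = (θ̄_1 - θ, …, θ̄_k - θ)`. -/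
def biasVec (n p : ℕ) (σv : Fin n → ℝ) (Ψ : Matrix (Fin p) (Fin n) ℝ) (w : ℕ → Fin n → ℝ)
    (k : ℕ) (f : Fin n → ℝ) (θ : Fin p → ℝ) : Fin k × Fin p → ℝ :=
  fun a => (thetaTilde n p σv Ψ (w (a.1 + 1)) f - θ) a.2

/-- The modeling bias `Δ(k) = b(k)ᵀ 𝚺_k⁻¹ b(k)`. -/
def DeltaK (n p : ℕ) (σv : Fin n → ℝ) (Ψ : Matrix (Fin p) (Fin n) ℝ) (w : ℕ → Fin n → ℝ)
    (k : ℕ) (f : Fin n → ℝ) (θ : Fin p → ℝ) : ℝ :=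
  biasVec n p σv Ψ w k f θ ⬝ᵥ
    (jointCov n p σv σv Ψ w k)⁻¹.mulVec (biasVec n p σv Ψ w k f θ)

/-- The componentwise `k × k` covariance `𝚺_{k,j}` with entries `(D_l Σm D_mᵀ)_{jj}`. -/
def jointCovComp (n p : ℕ) (σv σm : Fin n → ℝ) (Ψ : Matrix (Fin p) (Fin n) ℝ)
    (w : ℕ → Fin n → ℝ) (k : ℕ) (j : Fin p) : Matrix (Fin k) (Fin k) ℝ :=
  Matrix.of fun a b =>
    (Dmat n p σv Ψ (w (a.1 + 1)) * covMat n σm * (Dmat n p σv Ψ (w (b.1 + 1)))ᵀ) j j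

/-- The componentwise bias vector `b_j(k)`. -/
def biasVecComp (n p : ℕ) (σv : Fin n → ℝ) (Ψ : Matrix (Fin p) (Fin n) ℝ)
    (w : ℕ → Fin n → ℝ) (k : ℕ) (f : Fin n → ℝ) (θ : Fin p → ℝ) (j : Fin p) : Fin k → ℝ :=
  fun a => (thetaTilde n p σv Ψ (w (a.1 + 1)) f - θ) j

/-- The componentwise modeling bias `Δ_j(k) = b_j(k)ᵀ 𝚺_{k,j}⁻¹ b_j(k)`. -/
def DeltaComp (n p : ℕ) (σv : Fin n → ℝ) (Ψ : Matrix (Fin p) (Fin n) ℝ)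
    (w : ℕ → Fin n → ℝ) (k : ℕ) (f : Fin n → ℝ) (θ : Fin p → ℝ) (j : Fin p) : ℝ :=
  biasVecComp n p σv Ψ w k f θ j ⬝ᵥ
    (jointCovComp n p σv σv Ψ w k j)⁻¹.mulVec (biasVecComp n p σv Ψ w k f θ j)

open scoped Classical in
/-- `φ(δ)`: equal to `1` for homogeneous errors, `2(1+δ)/(1-δ)² - 1` otherwise. -/
def varphi (n : ℕ) (σ0 σv : Fin n → ℝ) (δ : ℝ) : ℝ :=
  if ∃ c0 c : ℝ, (∀ i, σ0 i = c0) ∧ (∀ i, σv i = c) then 1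
  else 2 * (1 + δ) / (1 - δ) ^ 2 - 1

/-- `σ̄²_max(k) = max_{1 ≤ l ≤ k} σ²_max(l)`. -/
def sbarMax (σmax : ℕ → ℝ) (k : ℕ) : ℝ :=
  sSup (σmax '' Set.Icc 1 k)

/-- Euclidean norm on `ℝ^p`. -/
def enorm {p : ℕ} (v : Fin p → ℝ) : ℝ :=
  Real.sqrt (∑ i, v i ^ 2)



/-! ### Auxiliary lemmas for the SMB theorem -/

section Aux

lemma psd_dot {q : ℕ} {A : Matrix (Fin q) (Fin q) ℝ} (hA : A.PosSemidef) (x : Fin q → ℝ) :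
    0 ≤ x ⬝ᵥ A.mulVec x := by
  simpa using hA.re_dotProduct_nonneg x

lemma posdef_smul {q : ℕ} {A : Matrix (Fin q) (Fin q) ℝ} (hA : A.PosDef) {c : ℝ} (hc : 0 < c) :
    (c • A).PosDef := by
  refine ⟨?_, fun x hx => ?_⟩
  · have := hA.isHermitian
    unfold Matrix.IsHermitian at *
    rw [Matrix.conjTranspose_smul, this]
    simp
  · exact (hA.smul hc).2 hx

lemma smul_inv_quad {q : ℕ} {A : Matrix (Fin q) (Fin q) ℝ} (hA : A.PosDef) {c : ℝ} (hc : 0 < c)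
    (x : Fin q → ℝ) : x ⬝ᵥ (c • A)⁻¹.mulVec x = c⁻¹ * (x ⬝ᵥ A⁻¹.mulVec x) := by
  haveI := invertibleOfNonzero hc.ne'
  rw [Matrix.inv_smul (A := A) c hA.det_pos.ne'.isUnit]
  simp [Matrix.smul_mulVec, invOf_eq_inv]

lemma sym_dot {q : ℕ} {A : Matrix (Fin q) (Fin q) ℝ} (hA : A.IsHermitian) (x y : Fin q → ℝ) :
    x ⬝ᵥ A.mulVec y = y ⬝ᵥ A.mulVec x := by
  rw [Matrix.dotProduct_mulVec, ← Matrix.mulVec_transpose,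
    show Aᵀ = A from (Matrix.conjTranspose_eq_transpose_of_trivial A) ▸ hA.eq]
  exact dotProduct_comm _ _

lemma cs_posdef {q : ℕ} {A : Matrix (Fin q) (Fin q) ℝ} (hA : A.PosDef) (x y : Fin q → ℝ) :
    (x ⬝ᵥ y) ^ 2 ≤ (y ⬝ᵥ A.mulVec y) * (x ⬝ᵥ A⁻¹.mulVec x) := by
  have hI := hA.isUnit
  set z := A⁻¹.mulVec x with hz
  have hAz : A.mulVec z = x := by
    rw [hz, Matrix.mulVec_mulVec,
      Matrix.mul_nonsing_inv _ (Matrix.isUnit_iff_isUnit_det _ |>.1 hI), Matrix.one_mulVec]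
  have hzx : z ⬝ᵥ A.mulVec z = x ⬝ᵥ A⁻¹.mulVec x := by
    rw [hAz, dotProduct_comm]
  have hyz : y ⬝ᵥ A.mulVec z = x ⬝ᵥ y := by
    rw [hAz]; exact dotProduct_comm _ _
  have key : ∀ t : ℝ, 0 ≤ (z ⬝ᵥ A.mulVec z) * (t * t) + (-2 * (x ⬝ᵥ y)) * t + (y ⬝ᵥ A.mulVec y) := by
    intro t
    have h0 : 0 ≤ (y - t • z) ⬝ᵥ A.mulVec (y - t • z) := psd_dot hA.posSemidef _
    have expand : (y - t • z) ⬝ᵥ A.mulVec (y - t • z)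
        = (y ⬝ᵥ A.mulVec y) - 2 * t * (y ⬝ᵥ A.mulVec z) + t * t * (z ⬝ᵥ A.mulVec z) := by
      simp only [Matrix.mulVec_sub, Matrix.mulVec_smul, sub_dotProduct,
        smul_dotProduct, dotProduct_sub, dotProduct_smul, smul_eq_mul]
      rw [sym_dot hA.isHermitian z y]
      ring
    rw [expand, hyz] at h0
    linarith
  have hd := discrim_le_zero key
  rw [discrim] at hd
  have h3 : x ⬝ᵥ z = z ⬝ᵥ A.mulVec z := by rw [hzx]
  rw [show (x ⬝ᵥ A⁻¹.mulVec x) = z ⬝ᵥ A.mulVec z from h3]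
  nlinarith [hd]

lemma inv_quad_antitone {q : ℕ} {A B : Matrix (Fin q) (Fin q) ℝ} (hA : A.PosDef) (hB : B.PosDef)
    (hAB : (B - A).PosSemidef) (x : Fin q → ℝ) :
    x ⬝ᵥ B⁻¹.mulVec x ≤ x ⬝ᵥ A⁻¹.mulVec x := by
  set y := B⁻¹.mulVec x with hy
  have hBy : B.mulVec y = x := by
    rw [hy, Matrix.mulVec_mulVec, Matrix.mul_nonsing_inv _ hB.det_pos.ne'.isUnit,
      Matrix.one_mulVec]
  have hs : x ⬝ᵥ y = y ⬝ᵥ B.mulVec y := by rw [hBy, dotProduct_comm]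
  have hyAB : y ⬝ᵥ A.mulVec y ≤ y ⬝ᵥ B.mulVec y := by
    have := psd_dot hAB y
    simp only [Matrix.sub_mulVec, dotProduct_sub] at this
    linarith
  have hcs := cs_posdef hA x y
  have hA0 : 0 ≤ y ⬝ᵥ A.mulVec y := psd_dot hA.posSemidef y
  have ht0 : 0 ≤ x ⬝ᵥ A⁻¹.mulVec x := psd_dot hA.inv.posSemidef x
  have hs0 : 0 ≤ y ⬝ᵥ B.mulVec y := psd_dot hB.posSemidef y
  nlinarith [hcs, hyAB, hA0, ht0, hs0, hs]

lemma WcovW (n : ℕ) (σv : Fin n → ℝ) (hσ : ∀ i, 0 < σv i) (wl : Fin n → ℝ)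
    (hw2 : ∀ i, wl i * wl i = wl i) :
    Wmat n σv wl * covMat n σv * Wmat n σv wl = Wmat n σv wl := by
  unfold Wmat covMat
  rw [Matrix.diagonal_mul_diagonal, Matrix.diagonal_mul_diagonal]
  refine congrArg Matrix.diagonal (funext fun i => ?_)
  have h2 := hw2 i
  have hσi : σv i ^ 2 ≠ 0 := pow_ne_zero _ (hσ i).ne'
  rw [div_mul_cancel₀ _ hσi, mul_div_assoc', h2]

lemma Bsym (n p : ℕ) (σv : Fin n → ℝ) (Ψ : Matrix (Fin p) (Fin n) ℝ) (wl : Fin n → ℝ) :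
    (Bmat n p σv Ψ wl)ᵀ = Bmat n p σv Ψ wl := by
  unfold Bmat Wmat
  rw [Matrix.transpose_mul, Matrix.transpose_mul, Matrix.transpose_transpose,
    Matrix.diagonal_transpose, Matrix.mul_assoc]

lemma DcovD (n p : ℕ) (σv : Fin n → ℝ) (hσ : ∀ i, 0 < σv i) (Ψ : Matrix (Fin p) (Fin n) ℝ)
    (wl : Fin n → ℝ) (hw2 : ∀ i, wl i * wl i = wl i) (hB : (Bmat n p σv Ψ wl).PosDef) :
    Dmat n p σv Ψ wl * covMat n σv * (Dmat n p σv Ψ wl)ᵀ = (Bmat n p σv Ψ wl)⁻¹ := by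
  have hU : IsUnit (Bmat n p σv Ψ wl).det := hB.det_pos.ne'.isUnit
  have hWt : (Wmat n σv wl)ᵀ = Wmat n σv wl := Matrix.diagonal_transpose _
  have hBi : ((Bmat n p σv Ψ wl)⁻¹)ᵀ = (Bmat n p σv Ψ wl)⁻¹ := by
    rw [Matrix.transpose_nonsing_inv, Bsym]
  have key : Dmat n p σv Ψ wl * covMat n σv * (Dmat n p σv Ψ wl)ᵀ
      = (Bmat n p σv Ψ wl)⁻¹ * (Ψ * (Wmat n σv wl * covMat n σv * Wmat n σv wl) * Ψᵀ)
        * (Bmat n p σv Ψ wl)⁻¹ := by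
    unfold Dmat
    rw [Matrix.transpose_mul, Matrix.transpose_mul, hWt, hBi]
    simp only [Matrix.mul_assoc]
  rw [key, WcovW n σv hσ wl hw2]
  show (Bmat n p σv Ψ wl)⁻¹ * Bmat n p σv Ψ wl * (Bmat n p σv Ψ wl)⁻¹ = _
  rw [Matrix.nonsing_inv_mul _ hU, Matrix.one_mul]

lemma quad_diag_entry {n p : ℕ} (D : Matrix (Fin p) (Fin n) ℝ) (d : Fin n → ℝ) (j : Fin p) :
    (D * Matrix.diagonal d * Dᵀ) j j = ∑ i, D j i ^ 2 * d i := by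
  rw [Matrix.mul_apply]
  refine Finset.sum_congr rfl fun i _ => ?_
  rw [Matrix.mul_diagonal, Matrix.transpose_apply]
  ring

lemma quad_single {p : ℕ} (M : Matrix (Fin p) (Fin p) ℝ) (j : Fin p) :
    Pi.single j 1 ⬝ᵥ M.mulVec (Pi.single j 1) = M j j := by
  classical
  simp [Matrix.mulVec, dotProduct, Pi.single_apply]

end Aux

/-- **SMB from the bias–variance trade-off.** Under (A4), (A5), (A8) and for nested
rectangular-type kernels, the "ideal adaptive bandwidth" index `k⋆(j)` defined through the
bias–variance relation satisfies the small modeling bias bound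
`Δ_j(k⋆(j)) ≤ s_j C_j² (1+δ) (1 - u0⁻¹)⁻¹`. -/
theorem smb_from_bias_variance_tradeoff
    (n p K : ℕ) (hpn : p < n) (hK : 1 ≤ K)
    (σv σ0 f : Fin n → ℝ) (hσ : ∀ i, 0 < σv i) (hσ0 : ∀ i, 0 < σ0 i)
    (Ψ : Matrix (Fin p) (Fin n) ℝ) (hA1 : Ψ.rank = p)
    (w : ℕ → Fin n → ℝ)
    (hw : ∀ k, 1 ≤ k → k ≤ K → ∀ i, w k i ∈ Set.Icc (0 : ℝ) 1)
    (hB : ∀ k, 1 ≤ k → k ≤ K → (Bmat n p σv Ψ (w k)).PosDef)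
    (δ : ℝ) (hδ0 : 0 ≤ δ) (hδ1 : δ < 1)
    (hA4 : ∀ i, (1 - δ) * σv i ^ 2 ≤ σ0 i ^ 2 ∧ σ0 i ^ 2 ≤ (1 + δ) * σv i ^ 2)
    (u0 u : ℝ) (hu0 : 1 < u0) (hu0u : u0 ≤ u)
    (hA5 : ∀ k, 2 ≤ k → k ≤ K →
      LoewnerLE (u0 • Bmat n p σv Ψ (w (k - 1))) (Bmat n p σv Ψ (w k)) ∧
      LoewnerLE (Bmat n p σv Ψ (w k)) (u • Bmat n p σv Ψ (w (k - 1))))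
    (hrect : ∀ l m, 1 ≤ l → l ≤ m → m ≤ K → ∀ i, w l i * w m i = w l i)
    (j : Fin p) (θ : Fin p → ℝ)
    (sj : ℝ) (hsj : 0 < sj)
    (hA8 : ∀ k, 1 ≤ k → k ≤ K →
      LoewnerLE (jointCovComp n p σv σv Ψ w k j)⁻¹
        (sj • (Matrix.diagonal fun a : Fin k => jointCovComp n p σv σv Ψ w k j a a)⁻¹))
    (Cj : ℝ) (hCj : 0 < Cj)
    (ks : ℕ) (hks1 : 1 ≤ ks) (hksK : ks ≤ K)
    (hksA : sSup ((fun l => |(thetaTilde n p σv Ψ (w l) f - θ) j|) '' Set.Icc 1 ks) ≤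
      Cj * Real.sqrt
        ((Dmat n p σv Ψ (w ks) * covMat n σ0 * (Dmat n p σv Ψ (w ks))ᵀ) j j))
    (hksMax : ∀ k, 1 ≤ k → k ≤ K →
      sSup ((fun l => |(thetaTilde n p σv Ψ (w l) f - θ) j|) '' Set.Icc 1 k) ≤
        Cj * Real.sqrt
          ((Dmat n p σv Ψ (w k) * covMat n σ0 * (Dmat n p σv Ψ (w k))ᵀ) j j) →
      k ≤ ks) :
    DeltaComp n p σv Ψ w ks f θ j ≤ sj * Cj ^ 2 * (1 + δ) * (1 - u0⁻¹)⁻¹ := by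
  classical
  have hu0pos : (0:ℝ) < u0 := lt_trans one_pos hu0
  have hrpos : (0:ℝ) < u0⁻¹ := inv_pos.2 hu0pos
  have hr1 : u0⁻¹ < 1 := inv_lt_one_of_one_lt₀ hu0
  have hejne : (Pi.single j 1 : Fin p → ℝ) ≠ 0 := by
    intro h
    have := congrFun h j
    simp at this
  -- abbreviations
  have hdpos : ∀ k, 1 ≤ k → k ≤ K → 0 < ((Bmat n p σv Ψ (w k))⁻¹) j j := by
    intro k h1 h2
    have hBk := (hB k h1 h2).inv
    have h := hBk.dotProduct_mulVec_pos hejne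
    simpa [quad_single] using h
  have hD : ∀ k, 1 ≤ k → k ≤ K →
      Dmat n p σv Ψ (w k) * covMat n σv * (Dmat n p σv Ψ (w k))ᵀ = (Bmat n p σv Ψ (w k))⁻¹ :=
    fun k h1 h2 => DcovD n p σv hσ Ψ (w k) (fun i => hrect k k h1 le_rfl h2 i) (hB k h1 h2)
  -- one-step decay of diagonal variance
  have hstep : ∀ k, 2 ≤ k → k ≤ K →
      ((Bmat n p σv Ψ (w k))⁻¹) j j ≤ u0⁻¹ * ((Bmat n p σv Ψ (w (k-1)))⁻¹) j j := by
    intro k h2 hKk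
    have hPrev := hB (k-1) (by omega) (by omega)
    have hCur := hB k (by omega) hKk
    have hpsd : (Bmat n p σv Ψ (w k) - u0 • Bmat n p σv Ψ (w (k-1))).PosSemidef :=
      (hA5 k h2 hKk).1
    have h := inv_quad_antitone (posdef_smul hPrev hu0pos) hCur hpsd (Pi.single j 1)
    rw [smul_inv_quad hPrev hu0pos] at h
    rw [quad_single, quad_single] at h
    exact h
  -- chained decay
  have hchain : ∀ m l, 1 ≤ l → l + m ≤ ks →
      ((Bmat n p σv Ψ (w (l + m)))⁻¹) j j ≤ u0⁻¹ ^ m * ((Bmat n p σv Ψ (w l))⁻¹) j j := by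
    intro m
    induction m with
    | zero => intro l h1 h2; simp
    | succ m ih =>
      intro l h1 h2
      have hs := hstep (l + m + 1) (by omega) (by omega)
      rw [show l + m + 1 - 1 = l + m from by omega] at hs
      have ih' := ih l h1 (by omega)
      have hmul : u0⁻¹ * ((Bmat n p σv Ψ (w (l + m)))⁻¹) j j
          ≤ u0⁻¹ * (u0⁻¹ ^ m * ((Bmat n p σv Ψ (w l))⁻¹) j j) :=
        mul_le_mul_of_nonneg_left ih' hrpos.le
      calc ((Bmat n p σv Ψ (w (l + (m+1))))⁻¹) j j
          = ((Bmat n p σv Ψ (w (l + m + 1)))⁻¹) j j := by rw [show l + (m+1) = l + m + 1 from by omega]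
        _ ≤ u0⁻¹ * ((Bmat n p σv Ψ (w (l + m)))⁻¹) j j := hs
        _ ≤ u0⁻¹ * (u0⁻¹ ^ m * ((Bmat n p σv Ψ (w l))⁻¹) j j) := hmul
        _ = u0⁻¹ ^ (m+1) * ((Bmat n p σv Ψ (w l))⁻¹) j j := by ring
  -- bias bound
  have hbias : ∀ l, 1 ≤ l → l ≤ ks →
      ((thetaTilde n p σv Ψ (w l) f - θ) j) ^ 2
        ≤ Cj ^ 2 * ((1+δ) * ((Bmat n p σv Ψ (w ks))⁻¹) j j) := by
    intro l h1 h2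
    have hmem : |(thetaTilde n p σv Ψ (w l) f - θ) j| ∈
        (fun l => |(thetaTilde n p σv Ψ (w l) f - θ) j|) '' Set.Icc 1 ks :=
      ⟨l, ⟨h1, h2⟩, rfl⟩
    have hbdd : BddAbove ((fun l => |(thetaTilde n p σv Ψ (w l) f - θ) j|) '' Set.Icc 1 ks) :=
      ((Set.finite_Icc 1 ks).image _).bddAbove
    have h3 : |(thetaTilde n p σv Ψ (w l) f - θ) j| ≤
        Cj * Real.sqrt ((Dmat n p σv Ψ (w ks) * covMat n σ0 * (Dmat n p σv Ψ (w ks))ᵀ) j j) :=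
      le_trans (le_csSup hbdd hmem) hksA
    have hVsum : (Dmat n p σv Ψ (w ks) * covMat n σ0 * (Dmat n p σv Ψ (w ks))ᵀ) j j
        = ∑ i, (Dmat n p σv Ψ (w ks)) j i ^ 2 * σ0 i ^ 2 :=
      quad_diag_entry (Dmat n p σv Ψ (w ks)) (fun i => σ0 i ^ 2) j
    have hV0 : 0 ≤ (Dmat n p σv Ψ (w ks) * covMat n σ0 * (Dmat n p σv Ψ (w ks))ᵀ) j j := by
      rw [hVsum]; positivity
    have hVle : (Dmat n p σv Ψ (w ks) * covMat n σ0 * (Dmat n p σv Ψ (w ks))ᵀ) j j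
        ≤ (1+δ) * ((Bmat n p σv Ψ (w ks))⁻¹) j j := by
      have hsum2 : (Dmat n p σv Ψ (w ks) * covMat n σv * (Dmat n p σv Ψ (w ks))ᵀ) j j
          = ∑ i, (Dmat n p σv Ψ (w ks)) j i ^ 2 * σv i ^ 2 :=
        quad_diag_entry (Dmat n p σv Ψ (w ks)) (fun i => σv i ^ 2) j
      have hle : ∑ i, (Dmat n p σv Ψ (w ks)) j i ^ 2 * σ0 i ^ 2
          ≤ (1+δ) * ∑ i, (Dmat n p σv Ψ (w ks)) j i ^ 2 * σv i ^ 2 := by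
        rw [Finset.mul_sum]
        refine Finset.sum_le_sum fun i _ => ?_
        have h4 := (hA4 i).2
        nlinarith [sq_nonneg ((Dmat n p σv Ψ (w ks)) j i)]
      rw [hVsum]
      calc ∑ i, (Dmat n p σv Ψ (w ks)) j i ^ 2 * σ0 i ^ 2
          ≤ (1+δ) * ∑ i, (Dmat n p σv Ψ (w ks)) j i ^ 2 * σv i ^ 2 := hle
        _ = (1+δ) * ((Bmat n p σv Ψ (w ks))⁻¹) j j := by rw [← hsum2, hD ks hks1 hksK]
    have h5 : ((thetaTilde n p σv Ψ (w l) f - θ) j) ^ 2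
        ≤ (Cj * Real.sqrt ((Dmat n p σv Ψ (w ks) * covMat n σ0 * (Dmat n p σv Ψ (w ks))ᵀ) j j)) ^ 2 := by
      rw [← sq_abs]
      exact pow_le_pow_left₀ (abs_nonneg _) h3 2
    have h6 : (Cj * Real.sqrt ((Dmat n p σv Ψ (w ks) * covMat n σ0 * (Dmat n p σv Ψ (w ks))ᵀ) j j)) ^ 2
        = Cj ^ 2 * ((Dmat n p σv Ψ (w ks) * covMat n σ0 * (Dmat n p σv Ψ (w ks))ᵀ) j j) := by
      rw [mul_pow, Real.sq_sqrt hV0]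
    rw [h6] at h5
    calc ((thetaTilde n p σv Ψ (w l) f - θ) j) ^ 2
        ≤ Cj ^ 2 * ((Dmat n p σv Ψ (w ks) * covMat n σ0 * (Dmat n p σv Ψ (w ks))ᵀ) j j) := h5
      _ ≤ Cj ^ 2 * ((1+δ) * ((Bmat n p σv Ψ (w ks))⁻¹) j j) :=
          mul_le_mul_of_nonneg_left hVle (sq_nonneg Cj)
  -- diagonal entries of the componentwise covariance
  have hc : ∀ a : Fin ks, jointCovComp n p σv σv Ψ w ks j a a
      = ((Bmat n p σv Ψ (w (a.1 + 1)))⁻¹) j j := by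
    intro a
    show (Dmat n p σv Ψ (w (a.1+1)) * covMat n σv * (Dmat n p σv Ψ (w (a.1+1)))ᵀ) j j = _
    rw [hD (a.1+1) (by omega) (by have := a.isLt; omega)]
  have hcpos : ∀ a : Fin ks, 0 < jointCovComp n p σv σv Ψ w ks j a a := by
    intro a
    rw [hc a]
    exact hdpos (a.1+1) (by omega) (by have := a.isLt; omega)
  -- apply (A8)
  have hA8' := hA8 ks hks1 hksK
  unfold LoewnerLE at hA8'
  have hq := psd_dot hA8' (biasVecComp n p σv Ψ w ks f θ j)
  have hΔ : DeltaComp n p σv Ψ w ks f θ j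
      ≤ biasVecComp n p σv Ψ w ks f θ j ⬝ᵥ
        (sj • (Matrix.diagonal fun a : Fin ks => jointCovComp n p σv σv Ψ w ks j a a)⁻¹).mulVec
          (biasVecComp n p σv Ψ w ks f θ j) := by
    unfold DeltaComp
    simp only [Matrix.sub_mulVec, dotProduct_sub] at hq
    linarith
  -- compute the RHS
  have hdiaginv : (Matrix.diagonal fun a : Fin ks => jointCovComp n p σv σv Ψ w ks j a a)⁻¹
      = Matrix.diagonal (fun a : Fin ks => (jointCovComp n p σv σv Ψ w ks j a a)⁻¹) := by
    letI : Invertible (fun a : Fin ks => jointCovComp n p σv σv Ψ w ks j a a) :=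
      ⟨fun a => (jointCovComp n p σv σv Ψ w ks j a a)⁻¹,
       funext fun a => inv_mul_cancel₀ (hcpos a).ne',
       funext fun a => mul_inv_cancel₀ (hcpos a).ne'⟩
    rw [Matrix.inv_diagonal, Ring.inverse_invertible]
    rfl
  have hRHS : biasVecComp n p σv Ψ w ks f θ j ⬝ᵥ
        (sj • (Matrix.diagonal fun a : Fin ks => jointCovComp n p σv σv Ψ w ks j a a)⁻¹).mulVec
          (biasVecComp n p σv Ψ w ks f θ j)
      = sj * ∑ a : Fin ks, (biasVecComp n p σv Ψ w ks f θ j a) ^ 2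
          * (jointCovComp n p σv σv Ψ w ks j a a)⁻¹ := by
    rw [hdiaginv]
    simp only [Matrix.smul_mulVec, dotProduct_smul, smul_eq_mul]
    congr 1
    simp only [dotProduct, Matrix.mulVec_diagonal]
    refine Finset.sum_congr rfl fun a _ => ?_
    ring
  -- termwise bound
  have hterm : ∀ a : Fin ks, (biasVecComp n p σv Ψ w ks f θ j a) ^ 2
        * (jointCovComp n p σv σv Ψ w ks j a a)⁻¹
      ≤ Cj ^ 2 * (1+δ) * u0⁻¹ ^ (ks - 1 - a.1) := by
    intro a
    have ha1 : a.1 + 1 ≤ ks := a.isLt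
    have hb2 := hbias (a.1+1) (by omega) ha1
    have hch := hchain (ks - 1 - a.1) (a.1 + 1) (by omega) (by omega)
    rw [show a.1 + 1 + (ks - 1 - a.1) = ks from by omega] at hch
    have hda : 0 < ((Bmat n p σv Ψ (w (a.1+1)))⁻¹) j j :=
      hdpos (a.1+1) (by omega) (by omega)
    have hbv : biasVecComp n p σv Ψ w ks f θ j a = (thetaTilde n p σv Ψ (w (a.1+1)) f - θ) j := rfl
    rw [hbv, hc a]
    have hq1 : ((thetaTilde n p σv Ψ (w (a.1+1)) f - θ) j) ^ 2
        ≤ Cj ^ 2 * (1+δ) * (u0⁻¹ ^ (ks - 1 - a.1) * ((Bmat n p σv Ψ (w (a.1+1)))⁻¹) j j) := by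
      calc ((thetaTilde n p σv Ψ (w (a.1+1)) f - θ) j) ^ 2
          ≤ Cj ^ 2 * ((1+δ) * ((Bmat n p σv Ψ (w ks))⁻¹) j j) := hb2
        _ ≤ Cj ^ 2 * (1+δ) * (u0⁻¹ ^ (ks - 1 - a.1) * ((Bmat n p σv Ψ (w (a.1+1)))⁻¹) j j) := by
            have hδpos : (0:ℝ) ≤ 1 + δ := by linarith
            have := mul_le_mul_of_nonneg_left hch hδpos
            nlinarith [sq_nonneg Cj]
    have h7 : ((thetaTilde n p σv Ψ (w (a.1+1)) f - θ) j) ^ 2 * (((Bmat n p σv Ψ (w (a.1+1)))⁻¹) j j)⁻¹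
        ≤ (Cj ^ 2 * (1+δ) * (u0⁻¹ ^ (ks - 1 - a.1) * ((Bmat n p σv Ψ (w (a.1+1)))⁻¹) j j))
            * (((Bmat n p σv Ψ (w (a.1+1)))⁻¹) j j)⁻¹ :=
      mul_le_mul_of_nonneg_right hq1 (inv_nonneg.2 hda.le)
    refine h7.trans_eq ?_
    have hgen : ∀ e : ℝ, e ≠ 0 →
        Cj ^ 2 * (1+δ) * (u0⁻¹ ^ (ks - 1 - a.1) * e) * e⁻¹
          = Cj ^ 2 * (1+δ) * u0⁻¹ ^ (ks - 1 - a.1) := by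
      intro e he
      field_simp
    exact hgen _ hda.ne'
  -- geometric sum
  have hgeom : ∑ a : Fin ks, u0⁻¹ ^ (ks - 1 - a.1) ≤ (1 - u0⁻¹)⁻¹ := by
    have h1 : ∑ a : Fin ks, u0⁻¹ ^ (ks - 1 - a.1)
        = ∑ i ∈ Finset.range ks, u0⁻¹ ^ (ks - 1 - i) :=
      Fin.sum_univ_eq_sum_range (fun i => u0⁻¹ ^ (ks - 1 - i)) ks
    have h2 : ∑ i ∈ Finset.range ks, u0⁻¹ ^ (ks - 1 - i)
        = ∑ i ∈ Finset.range ks, u0⁻¹ ^ i :=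
      Finset.sum_range_reflect (fun i => u0⁻¹ ^ i) ks
    rw [h1, h2, geom_sum_eq hr1.ne ks]
    have hden : (0:ℝ) < 1 - u0⁻¹ := by linarith
    rw [show (u0⁻¹ ^ ks - 1) / (u0⁻¹ - 1) = (1 - u0⁻¹ ^ ks) / (1 - u0⁻¹) from by
      rw [← neg_sub (1:ℝ) (u0⁻¹ ^ ks), ← neg_sub (1:ℝ) u0⁻¹, neg_div_neg_eq]]
    rw [← one_div ((1:ℝ) - u0⁻¹)]
    apply div_le_div_of_nonneg_right _ hden.le |>.trans_eq rfl
    have : 0 ≤ u0⁻¹ ^ ks := by positivity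
    linarith
  -- put everything together
  calc DeltaComp n p σv Ψ w ks f θ j
      ≤ sj * ∑ a : Fin ks, (biasVecComp n p σv Ψ w ks f θ j a) ^ 2
          * (jointCovComp n p σv σv Ψ w ks j a a)⁻¹ := by rw [← hRHS]; exact hΔ
    _ ≤ sj * ∑ a : Fin ks, Cj ^ 2 * (1+δ) * u0⁻¹ ^ (ks - 1 - a.1) :=
        mul_le_mul_of_nonneg_left (Finset.sum_le_sum fun a _ => hterm a) hsj.le
    _ = sj * (Cj ^ 2 * (1+δ)) * ∑ a : Fin ks, u0⁻¹ ^ (ks - 1 - a.1) := by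
        rw [← Finset.mul_sum]; ring
    _ ≤ sj * (Cj ^ 2 * (1+δ)) * (1 - u0⁻¹)⁻¹ := by
        have hpos : (0:ℝ) ≤ sj * (Cj ^ 2 * (1+δ)) := by positivity
        exact mul_le_mul_of_nonneg_left hgeom hpos
    _ = sj * Cj ^ 2 * (1 + δ) * (1 - u0⁻¹)⁻¹ := by ring


end SpatialAdapt
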